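/- No quadrilateral inscribed in a convex pentagon can intersect the interiors of all five corner triangles T_0,…,T_4 of the pentagon. -/

import Mathlib

local notation "E" => (Fin 2 → ℝ)

/-- 2D cross product / determinant. -/
def dt (u w : E) : ℝ := u 0 * w 1 - u 1 * w 0

/-- `dt u` as a linear map. -/
noncomputable def dtL (u : E) : E →ₗ[ℝ] ℝ :=
  u 0 • ((LinearMap.proj 1 : E →ₗ[ℝ] ℝ)) - u 1 • ((LinearMap.proj 0 : E →ₗ[ℝ] ℝ))

lemma dtL_apply (u w : E) : dtL u w = dt u w := by
  simp [dtL, dt]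

lemma vec_eq (u : E) : u = u 0 • (fun j => if j = 0 then (1:ℝ) else 0) + u 1 • (fun j => if j = 1 then (1:ℝ) else 0) := by
  funext i
  fin_cases i <;> simp

/-- Two vectors in the kernel of a nontrivial functional have zero det. -/
lemma dt_eq_zero_of_ker (f : E →ₗ[ℝ] ℝ) (u w p : E) (hu : f u = 0) (hw : f w = 0)
    (hp : f p ≠ 0) : dt u w = 0 := by
  set e0 : E := (fun j => if j = 0 then (1:ℝ) else 0)
  set e1 : E := (fun j => if j = 1 then (1:ℝ) else 0)
  have hrep : ∀ x : E, f x = x 0 * f e0 + x 1 * f e1 := by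
    intro x
    conv_lhs => rw [vec_eq x]
    simp [map_add, map_smul]; rfl
  have h1 := hrep u
  have h2 := hrep w
  have h3 := hrep p
  rw [hu] at h1; rw [hw] at h2
  have hα : f e0 ≠ 0 ∨ f e1 ≠ 0 := by
    by_contra h
    push_neg at h
    apply hp
    rw [h3, h.1, h.2]; ring
  have k1 : f e0 * dt u w = 0 := by
    simp only [dt]
    linear_combination (-(w 1)) * h1 + (u 1) * h2
  have k2 : f e1 * dt u w = 0 := by
    simp only [dt]
    linear_combination (w 0) * h1 + (-(u 0)) * h2
  rcases hα with h | h
  · exact (mul_eq_zero.mp k1).resolve_left h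
  · exact (mul_eq_zero.mp k2).resolve_left h

/-- If `dt u w = 0` and `u ≠ 0`, then `w` is a multiple of `u`. -/
lemma exists_smul_of_dt_eq_zero (u w : E) (h : dt u w = 0) (hu : u ≠ 0) :
    ∃ t : ℝ, w = t • u := by
  simp only [dt] at h
  have h01 : u 0 ≠ 0 ∨ u 1 ≠ 0 := by
    by_contra hc
    push_neg at hc
    apply hu
    funext i; fin_cases i <;> simp [hc.1, hc.2]
  rcases h01 with h0 | h0
  · refine ⟨w 0 / u 0, ?_⟩
    funext i
    fin_cases i
    · simp only [Pi.smul_apply, smul_eq_mul, Fin.mk_zero, Fin.mk_one]; field_simp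
    · simp only [Pi.smul_apply, smul_eq_mul, Fin.mk_zero, Fin.mk_one]; field_simp; linarith
  · refine ⟨w 1 / u 1, ?_⟩
    funext i
    fin_cases i
    · simp only [Pi.smul_apply, smul_eq_mul, Fin.mk_zero, Fin.mk_one]; field_simp; linarith
    · simp only [Pi.smul_apply, smul_eq_mul, Fin.mk_zero, Fin.mk_one]; field_simp
lemma combo3_mem {s : Set E} (hs : Convex ℝ s) {A B C : E} (hA : A ∈ s) (hB : B ∈ s)
    (hC : C ∈ s) {a b c : ℝ} (ha : 0 ≤ a) (hb : 0 ≤ b) (hc : 0 ≤ c) (habc : a + b + c = 1) :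
    a • A + b • B + c • C ∈ s := by
  by_cases h : b + c = 0
  · have hb0 : b = 0 := by linarith
    have hc0 : c = 0 := by linarith
    have ha1 : a = 1 := by linarith
    simpa [hb0, hc0, ha1] using hA
  · have hbc : 0 < b + c := lt_of_le_of_ne (by linarith) (Ne.symm h)
    have hy : (b/(b+c)) • B + (c/(b+c)) • C ∈ s :=
      hs hB hC (by positivity) (by positivity) (by field_simp)
    have := hs hA hy ha (le_of_lt hbc) (by linarith)
    have heq : a • A + (b+c) • ((b/(b+c)) • B + (c/(b+c)) • C) = a • A + b • B + c • C := by
      rw [smul_add, smul_smul, smul_smul]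
      rw [mul_div_cancel₀ _ h, mul_div_cancel₀ _ h, add_assoc]
    rwa [heq] at this

lemma mem_triangle_of_faces (A B C x : E) (α β γ : E →ₗ[ℝ] ℝ) (cα cβ cγ : ℝ)
    (hαA : α A = cα) (hαB : α B = cα) (hαC : α C < cα) (hαx : α x ≤ cα)
    (hβB : β B = cβ) (hβC : β C = cβ) (hβA : β A < cβ) (hβx : β x ≤ cβ)
    (hγC : γ C = cγ) (hγA : γ A = cγ) (hγB : γ B < cγ) (hγx : γ x ≤ cγ) :
    x ∈ convexHull ℝ ({A, B, C} : Set E) := by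
  have hD : dt (B - A) (C - A) ≠ 0 := by
    intro hD
    have hBA : B - A ≠ 0 := by
      intro h
      rw [sub_eq_zero] at h
      rw [h] at hγB
      linarith [hγB, hγA.ge]
    obtain ⟨t, ht⟩ := exists_smul_of_dt_eq_zero _ _ hD hBA
    have : α C - α A = t * (α B - α A) := by
      rw [← map_sub, ht, map_smul, map_sub]; rfl
    rw [hαA, hαB] at this
    simp at this
    linarith
  set D := dt (B - A) (C - A) with hDdef
  set p' := dt (x - A) (C - A) with hp'
  set q' := dt (B - A) (x - A) with hq'
  have key : D • x = (D - p' - q') • A + p' • B + q' • C := by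
    funext i
    simp only [Pi.add_apply, Pi.smul_apply, smul_eq_mul, hp', hq', hDdef, dt, Pi.sub_apply]
    fin_cases i <;> simp only [Fin.mk_zero, Fin.mk_one] <;> ring
  set p := p' / D with hp
  set q := q' / D with hq
  have hx : x = (1 - p - q) • A + p • B + q • C := by
    clear_value D p' q'
    apply smul_right_injective (Fin 2 → ℝ) hD
    show D • x = D • ((1 - p - q) • A + p • B + q • C)
    rw [key, smul_add, smul_add, smul_smul, smul_smul, smul_smul]
    have c1 : D * (1 - p - q) = D - p' - q' := by rw [hp, hq]; field_simp
    have c2 : D * p = p' := by rw [hp]; field_simp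
    have c3 : D * q = q' := by rw [hq]; field_simp
    rw [c1, c2, c3]
  have hαx' : α x = (1 - q) * cα + q * α C := by
    rw [hx]; simp only [map_add, map_smul, smul_eq_mul, hαA, hαB]; ring
  have hq0 : 0 ≤ q := by nlinarith [hαx, hαx'.symm.trans_le hαx]
  have hβx' : β x = (1 - (1 - p - q)) * cβ + (1 - p - q) * β A := by
    rw [hx]; simp only [map_add, map_smul, smul_eq_mul, hβB, hβC]; ring
  have hr0 : 0 ≤ 1 - p - q := by
    rw [hβx'] at hβx; nlinarith
  have hp0 : 0 ≤ p := by
    have hγx' : γ x = (1 - p) * cγ + p * γ B := by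
      rw [hx]; simp only [map_add, map_smul, smul_eq_mul, hγA, hγC]; ring
    rw [hγx'] at hγx; nlinarith
  have hA : A ∈ convexHull ℝ ({A, B, C} : Set E) := subset_convexHull ℝ _ (by simp)
  have hB : B ∈ convexHull ℝ ({A, B, C} : Set E) := subset_convexHull ℝ _ (by simp)
  have hC : C ∈ convexHull ℝ ({A, B, C} : Set E) := subset_convexHull ℝ _ (by simp)
  rw [hx]
  exact combo3_mem (convex_convexHull ℝ _) hA hB hC hr0 hp0 hq0 (by ring)

section Pentagon

variable {v : Fin 5 → E}

def HCP (v : Fin 5 → E) : Prop := ∀ i : Fin 5, v i ∉ convexHull ℝ (v '' {j | j ≠ i})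

def HCY (v : Fin 5 → E) : Prop := ∀ i : Fin 5,
  segment ℝ (v i) (v (i + 1)) ⊆ frontier (convexHull ℝ (Set.range v))

lemma pent_inj (hconvpos : HCP v) : ∀ i j : Fin 5, i ≠ j → v i ≠ v j := by
  intro i j hij he
  exact hconvpos i (subset_convexHull ℝ _ ⟨j, by simp [Ne.symm hij], he.symm⟩)

lemma mem_hullO (v : Fin 5 → E) (i m : Fin 5) (him : i ≠ m) :
    v i ∈ convexHull ℝ (v '' {l | l ≠ m}) :=
  subset_convexHull ℝ _ ⟨i, him, rfl⟩

/-- No three vertices of the pentagon are collinear. -/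
lemma pent_nc (hconvpos : HCP v) : ∀ i j k : Fin 5, i ≠ j → i ≠ k → j ≠ k →
    dt (v j - v i) (v k - v i) ≠ 0 := by
  intro i j k hij hik hjk h0
  have hd : v j - v i ≠ 0 := sub_ne_zero.mpr (pent_inj hconvpos j i (Ne.symm hij))
  obtain ⟨t, ht⟩ := exists_smul_of_dt_eq_zero _ _ h0 hd
  have h2 : v k = v i + t • (v j - v i) := by rw [← ht]; module
  have h3 : v k = (1 - t) • v i + t • v j := by rw [h2]; module
  rcases le_or_gt t 0 with htle | htpos
  · rcases eq_or_lt_of_le htle with hteq | htlt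
    · -- t = 0 : v k = v i, contradiction with injectivity
      apply pent_inj hconvpos i k hik
      rw [h2, hteq]; module
    · -- t < 0 : v i ∈ [v j, v k]
      apply hconvpos i
      have hne : (1 - t) ≠ 0 := by linarith
      have h7 : (1 - t) • v i = v k - t • v j := by rw [h3]; module
      have h8 : v i = (1 - t)⁻¹ • (v k - t • v j) := by
        rw [← h7, smul_smul, inv_mul_cancel₀ hne, one_smul]
      have h9 : v i = ((1 - t)⁻¹ * (-t)) • v j + (1 - t)⁻¹ • v k := by rw [h8]; module
      have hinv : (1 - t)⁻¹ * (1 - t) = 1 := inv_mul_cancel₀ hne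
      have hpos : 0 < (1 - t)⁻¹ := inv_pos.mpr (by linarith)
      rw [h9]
      exact (convex_convexHull ℝ _)
        (mem_hullO v j i (Ne.symm hij)) (mem_hullO v k i (Ne.symm hik))
        (by nlinarith) (le_of_lt hpos) (by linear_combination hinv)
  · rcases le_or_gt t 1 with htle1 | htgt1
    · -- 0 < t ≤ 1 : v k ∈ [v i, v j]
      apply hconvpos k
      rw [h3]
      exact (convex_convexHull ℝ _)
        (mem_hullO v i k hik) (mem_hullO v j k hjk)
        (by linarith) (by linarith) (by ring)
    · -- t > 1 : v j ∈ [v i, v k]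
      apply hconvpos j
      have ht0 : (0:ℝ) < t := by linarith
      have hti : t⁻¹ * t = 1 := inv_mul_cancel₀ (ne_of_gt ht0)
      have hp1 : 0 < t⁻¹ := inv_pos.mpr ht0
      have h4 : v j = (1 - t⁻¹) • v i + t⁻¹ • v k := by
        rw [h2, smul_add, smul_smul, hti]; module
      rw [h4]
      exact (convex_convexHull ℝ _)
        (mem_hullO v i j hij) (mem_hullO v k j (Ne.symm hjk))
        (by nlinarith) (le_of_lt hp1) (by ring)

lemma pent_span (hconvpos : HCP v) : affineSpan ℝ (Set.range v) = ⊤ := by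
  rw [AffineSubspace.affineSpan_eq_top_iff_vectorSpan_eq_top_of_nonempty ℝ (Fin 2 → ℝ)
    (Fin 2 → ℝ) ⟨v 0, Set.mem_range_self 0⟩]
  rw [Submodule.eq_top_iff']
  intro x
  set u1 := v 1 - v 0 with hu1
  set u2 := v 2 - v 0 with hu2
  have hD : dt u1 u2 ≠ 0 := pent_nc hconvpos 0 1 2 (by decide) (by decide) (by decide)
  set D := dt u1 u2 with hDdef
  have hm1 : u1 ∈ vectorSpan ℝ (Set.range v) :=
    vsub_mem_vectorSpan ℝ (Set.mem_range_self 1) (Set.mem_range_self (0 : Fin 5))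
  have hm2 : u2 ∈ vectorSpan ℝ (Set.range v) :=
    vsub_mem_vectorSpan ℝ (Set.mem_range_self 2) (Set.mem_range_self (0 : Fin 5))
  have hx : x = (D⁻¹ * dt x u2) • u1 + (D⁻¹ * dt u1 x) • u2 := by
    apply smul_right_injective (Fin 2 → ℝ) hD
    show D • x = D • _
    have key : D • x = (dt x u2) • u1 + (dt u1 x) • u2 := by
      funext i
      simp only [Pi.add_apply, Pi.smul_apply, smul_eq_mul, hDdef, hu1, hu2, dt, Pi.sub_apply]
      fin_cases i <;> simp only [Fin.mk_zero, Fin.mk_one] <;> ring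
    rw [key, smul_add, smul_smul, smul_smul, ← mul_assoc, ← mul_assoc,
      mul_inv_cancel₀ hD, one_mul, one_mul]
  rw [hx]
  exact Submodule.add_mem _ (Submodule.smul_mem _ _ hm1) (Submodule.smul_mem _ _ hm2)

lemma pent_int_nonempty (hconvpos : HCP v) :
    (interior (convexHull ℝ (Set.range v))).Nonempty := by
  rw [(convex_convexHull ℝ _).interior_nonempty_iff_affineSpan_eq_top]
  rw [affineSpan_convexHull]
  exact pent_span hconvpos

/-- Supporting functional at a frontier point. -/
lemma pent_support (hconvpos : HCP v) (x : E)
    (hx : x ∈ frontier (convexHull ℝ (Set.range v))) :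
    ∃ f : E →ₗ[ℝ] ℝ, (∃ p, f p < f x) ∧
      ∀ y ∈ convexHull ℝ (Set.range v), f y ≤ f x := by
  set P := convexHull ℝ (Set.range v) with hP
  obtain ⟨z, hz⟩ := pent_int_nonempty hconvpos
  have hxi : x ∉ interior P := fun h => hx.2 h
  obtain ⟨f, hf⟩ := geometric_hahn_banach_open_point
    ((convex_convexHull ℝ (Set.range v)).interior) isOpen_interior hxi
  refine ⟨f.toLinearMap, ⟨z, hf z hz⟩, fun y hy => ?_⟩
  show f y ≤ f x
  by_contra hlt
  push_neg at hlt
  have hfz : f z < f x := hf z hz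
  set a := (f y - f x) / (f y - f z) with ha
  have hden : 0 < f y - f z := by linarith
  have ha0 : 0 < a := div_pos (by linarith) hden
  have ha1 : a ≤ 1 := (div_le_one hden).mpr (by linarith)
  have hcombo : a • z + (1 - a) • y ∈ interior P :=
    (convex_convexHull ℝ (Set.range v)).combo_interior_closure_mem_interior
      hz (subset_closure hy) ha0 (by linarith) (by ring)
  have hcon := hf _ hcombo
  have hval : f (a • z + (1 - a) • y) = f x := by
    rw [map_add, map_smul, map_smul, smul_eq_mul, smul_eq_mul]
    have hc : a * (f y - f z) = f y - f x := by
      rw [ha, div_mul_cancel₀ _ (ne_of_gt hden)]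
    nlinarith [hc]
  rw [hval] at hcon
  exact lt_irrefl _ hcon

end Pentagon

lemma dt_sub (d x w : E) : dt d (x - w) = dt d x - dt d w := by
  simp only [dt, Pi.sub_apply]; ring

lemma dt_self (d : E) : dt d d = 0 := by simp only [dt]; ring

lemma dt_combo (d x y w : E) (c₁ c₂ : ℝ) (h : c₁ + c₂ = 1) :
    dt d (c₁ • x + c₂ • y - w) = c₁ * dt d (x - w) + c₂ * dt d (y - w) := by
  simp only [dt, Pi.sub_apply, Pi.add_apply, Pi.smul_apply, smul_eq_mul]
  linear_combination (d 0 * w 1 - d 1 * w 0) * h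

section Pentagon2

variable {v : Fin 5 → E}

/-- Each edge of the pentagon is a strict face. -/
lemma edge_face (hconvpos : HCP v) (hcyc : HCY v) (i : Fin 5) :
    ∃ (f : E →ₗ[ℝ] ℝ) (c : ℝ), (∀ y ∈ convexHull ℝ (Set.range v), f y ≤ c) ∧
      f (v i) = c ∧ f (v (i+1)) = c ∧ ∀ k : Fin 5, k ≠ i → k ≠ i+1 → f (v k) < c := by
  set m : E := (2⁻¹ : ℝ) • v i + (2⁻¹ : ℝ) • v (i+1) with hm
  have hmseg : m ∈ segment ℝ (v i) (v (i+1)) :=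
    ⟨2⁻¹, 2⁻¹, by norm_num, by norm_num, by norm_num, rfl⟩
  obtain ⟨f, ⟨p, hp⟩, hle⟩ := pent_support hconvpos m (hcyc i hmseg)
  refine ⟨f, f m, hle, ?_⟩
  have h1 : f (v i) ≤ f m := hle _ (subset_convexHull ℝ _ (Set.mem_range_self i))
  have h2 : f (v (i+1)) ≤ f m := hle _ (subset_convexHull ℝ _ (Set.mem_range_self (i+1)))
  have hmid : f m = 2⁻¹ * f (v i) + 2⁻¹ * f (v (i+1)) := by
    rw [hm, map_add, map_smul, map_smul, smul_eq_mul, smul_eq_mul]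
  have he1 : f (v i) = f m := by linarith
  have he2 : f (v (i+1)) = f m := by linarith
  refine ⟨he1, he2, ?_⟩
  intro k hk1 hk2
  rcases lt_or_eq_of_le (hle _ (subset_convexHull ℝ _ (Set.mem_range_self k))) with h | h
  · exact h
  · exfalso
    have hz1 : f (v (i+1) - v i) = 0 := by rw [map_sub, he1, he2, sub_self]
    have hz2 : f (v k - v i) = 0 := by rw [map_sub, he1, h, sub_self]
    have hnz : f (p - m) ≠ 0 := by rw [map_sub]; exact sub_ne_zero.mpr (ne_of_lt hp)
    exact pent_nc hconvpos i (i+1) k ((by decide : ∀ j : Fin 5, j ≠ j + 1) i)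
      (Ne.symm hk1) (Ne.symm hk2) (dt_eq_zero_of_ker f _ _ _ hz1 hz2 hnz)

/-- A point strictly inside a boundary edge cannot lie on the line through
two other vertices. -/
lemma no_cross (hconvpos : HCP v) (hcyc : HCY v) (a j k : Fin 5)
    (haj : a ≠ j) (hak : a ≠ k) (h1j : a+1 ≠ j) (h1k : a+1 ≠ k) (hjk : j ≠ k)
    (c₁ c₂ : ℝ) (hc₁ : 0 < c₁) (hc₂ : 0 < c₂) (hsum : c₁ + c₂ = 1)
    (hline : dt (v k - v j) ((c₁ • v a + c₂ • v (a+1)) - v j) = 0) : False := by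
  set z : E := c₁ • v a + c₂ • v (a+1) with hzdef
  have hzseg : z ∈ segment ℝ (v a) (v (a+1)) :=
    ⟨c₁, c₂, le_of_lt hc₁, le_of_lt hc₂, hsum, rfl⟩
  obtain ⟨f, ⟨p, hp⟩, hle⟩ := pent_support hconvpos z (hcyc a hzseg)
  have hfa : f (v a) ≤ f z := hle _ (subset_convexHull ℝ _ (Set.mem_range_self a))
  have hfb : f (v (a+1)) ≤ f z := hle _ (subset_convexHull ℝ _ (Set.mem_range_self (a+1)))
  have hcomb : f z = c₁ * f (v a) + c₂ * f (v (a+1)) := by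
    rw [hzdef, map_add, map_smul, map_smul, smul_eq_mul, smul_eq_mul]
  have hs : c₁ * f z + c₂ * f z = f z := by linear_combination (f z) * hsum
  have heqa : f (v a) = f z := by
    have e2 : c₂ * f (v (a+1)) ≤ c₂ * f z := mul_le_mul_of_nonneg_left hfb hc₂.le
    have e1 : c₁ * f z ≤ c₁ * f (v a) := by linarith
    exact le_antisymm hfa (le_of_mul_le_mul_left e1 hc₁)
  have heqb : f (v (a+1)) = f z := by
    have e2 : c₁ * f (v a) ≤ c₁ * f z := mul_le_mul_of_nonneg_left hfa hc₁.le
    have e1 : c₂ * f z ≤ c₂ * f (v (a+1)) := by linarith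
    exact le_antisymm hfb (le_of_mul_le_mul_left e1 hc₂)
  have hstrict : ∀ l : Fin 5, l ≠ a → l ≠ a + 1 → f (v l) < f z := by
    intro l hl1 hl2
    rcases lt_or_eq_of_le (hle _ (subset_convexHull ℝ _ (Set.mem_range_self l))) with h | h
    · exact h
    · exfalso
      have hz1 : f (v (a+1) - v a) = 0 := by rw [map_sub, heqa, heqb, sub_self]
      have hz2 : f (v l - v a) = 0 := by rw [map_sub, heqa, h, sub_self]
      have hnz : f (p - z) ≠ 0 := by rw [map_sub]; exact sub_ne_zero.mpr (ne_of_lt hp)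
      exact pent_nc hconvpos a (a+1) l ((by decide : ∀ j : Fin 5, j ≠ j + 1) a)
        (Ne.symm hl1) (Ne.symm hl2) (dt_eq_zero_of_ker f _ _ _ hz1 hz2 hnz)
  have hfj : f (v j) < f z := hstrict j (Ne.symm haj) (Ne.symm h1j)
  have hfk : f (v k) < f z := hstrict k (Ne.symm hak) (Ne.symm h1k)
  have hd : v k - v j ≠ 0 := sub_ne_zero.mpr (pent_inj hconvpos k j (Ne.symm hjk))
  obtain ⟨r, hr⟩ := exists_smul_of_dt_eq_zero _ _ hline hd
  have hfr : f z - f (v j) = r * (f (v k) - f (v j)) := by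
    have := congrArg f hr
    rw [map_sub, map_smul, smul_eq_mul, map_sub] at this
    linarith [this.le, this.ge]
  rcases lt_trichotomy r 0 with hr0 | hr0 | hr0
  · -- r < 0 : v j ∈ segment (v k) z
    apply hconvpos j
    have hne : (1 - r) ≠ 0 := by linarith
    have h3 : z = (1 - r) • v j + r • v k := by
      have : z = v j + r • (v k - v j) := by rw [← hr]; module
      rw [this]; module
    have h7 : (1 - r) • v j = z - r • v k := by rw [h3]; module
    have h8 : v j = (1 - r)⁻¹ • (z - r • v k) := by
      rw [← h7, smul_smul, inv_mul_cancel₀ hne, one_smul]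
    have h9 : v j = ((1 - r)⁻¹ * (-r)) • v k + (1 - r)⁻¹ • z := by rw [h8]; module
    have hinv : (1 - r)⁻¹ * (1 - r) = 1 := inv_mul_cancel₀ hne
    have hpos : 0 < (1 - r)⁻¹ := inv_pos.mpr (by linarith)
    have hzmem : z ∈ convexHull ℝ (v '' {l | l ≠ j}) := by
      rw [hzdef]
      exact (convex_convexHull ℝ _) (mem_hullO v a j haj) (mem_hullO v (a+1) j h1j)
        (le_of_lt hc₁) (le_of_lt hc₂) hsum
    rw [h9]
    exact (convex_convexHull ℝ _) (mem_hullO v k j (Ne.symm hjk)) hzmem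
      (by nlinarith) (le_of_lt hpos) (by linear_combination hinv)
  · -- r = 0 : z = v j, but f z > f (v j)
    rw [hr0] at hfr
    simp at hfr
    linarith
  · -- r > 0 : then r ≤ 1 impossible by f-values, r > 1 gives v k ∈ segment
    rcases le_or_gt r 1 with hr1 | hr1
    · nlinarith
    · apply hconvpos k
      have hrne : r ≠ 0 := by linarith
      have h5 : r⁻¹ • (z - v j) = v k - v j := by
        rw [hr, smul_smul, inv_mul_cancel₀ hrne, one_smul]
      have h6 : v k = v j + r⁻¹ • (z - v j) := by rw [h5]; module
      have h4 : v k = (1 - r⁻¹) • v j + r⁻¹ • z := by rw [h6]; module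
      have hi : 0 < r⁻¹ := inv_pos.mpr (by linarith)
      have hti : r⁻¹ * r = 1 := inv_mul_cancel₀ hrne
      have hzmem : z ∈ convexHull ℝ (v '' {l | l ≠ k}) := by
        rw [hzdef]
        exact (convex_convexHull ℝ _) (mem_hullO v a k hak) (mem_hullO v (a+1) k h1k)
          (le_of_lt hc₁) (le_of_lt hc₂) hsum
      rw [h4]
      exact (convex_convexHull ℝ _) (mem_hullO v j k hjk) hzmem
        (by nlinarith) (le_of_lt hi) (by ring)

end Pentagon2

/-- The diagonal through `v (i+4)` and `v (i+1)` weakly separates `v i`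
from `v (i+2)` and `v (i+3)`. -/
lemma diag_core {v : Fin 5 → E} (hconvpos : HCP v) (hcyc : HCY v) (i m m' : Fin 5)
    (hmm' : (m = i+2 ∧ m' = i+3) ∨ (m = i+3 ∧ m' = i+2)) :
    dt (v (i+1) - v (i+4)) (v i - v (i+4)) *
      dt (v (i+1) - v (i+4)) (v m - v (i+4)) ≤ 0 := by
  set d : E := v (i+1) - v (i+4) with hd
  set base : E := v (i+4) with hbase
  set σ : ℝ := dt d (v i - base) with hσdef
  have hσ : σ ≠ 0 :=
    pent_nc hconvpos (i+4) (i+1) i ((by decide : ∀ x : Fin 5, x + 4 ≠ x + 1) i)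
      ((by decide : ∀ x : Fin 5, x + 4 ≠ x) i) ((by decide : ∀ x : Fin 5, x + 1 ≠ x) i)
  by_contra hpos
  push_neg at hpos
  rcases lt_trichotomy (σ * dt d (v m' - base)) 0 with hneg | h0 | hpos'
  · -- the two far vertices are on opposite sides: edge (i+2)-(i+3) crosses the line
    set w2 : ℝ := dt d (v (i+2) - base) with hw2
    set w3 : ℝ := dt d (v (i+3) - base) with hw3
    have h23 : w2 * w3 < 0 := by
      have hprod : (σ * dt d (v m - base)) * (σ * dt d (v m' - base)) < 0 :=
        mul_neg_of_pos_of_neg hpos hneg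
      by_contra hcon
      push_neg at hcon
      rcases hmm' with ⟨h1, h2⟩ | ⟨h1, h2⟩ <;> subst h1 <;> subst h2 <;>
        nlinarith [mul_nonneg (mul_self_nonneg σ) hcon]
    have hne1 : w3 - w2 ≠ 0 := by
      intro h
      have h' : w3 = w2 := by linarith
      rw [h'] at h23
      exact absurd (mul_self_nonneg w2) (not_le.mpr h23)
    have hne2 : w2 - w3 ≠ 0 := by intro h; exact hne1 (by linarith)
    set c₁ : ℝ := w3 / (w3 - w2) with hc₁def
    set c₂ : ℝ := w2 / (w2 - w3) with hc₂def
    have hc₁ : 0 < c₁ := by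
      rcases mul_neg_iff.mp h23 with ⟨hp2, hn3⟩ | ⟨hn2, hp3⟩
      · exact div_pos_iff.mpr (Or.inr ⟨hn3, by linarith⟩)
      · exact div_pos_iff.mpr (Or.inl ⟨hp3, by linarith⟩)
    have hc₂ : 0 < c₂ := by
      rcases mul_neg_iff.mp h23 with ⟨hp2, hn3⟩ | ⟨hn2, hp3⟩
      · exact div_pos_iff.mpr (Or.inl ⟨hp2, by linarith⟩)
      · exact div_pos_iff.mpr (Or.inr ⟨hn2, by linarith⟩)
    have hsum : c₁ + c₂ = 1 := by
      rw [hc₁def, hc₂def]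
      field_simp
      ring
    have hline : dt d ((c₁ • v (i+2) + c₂ • v (i+2+1)) - base) = 0 := by
      rw [(by decide : ∀ x : Fin 5, x + 2 + 1 = x + 3) i, dt_combo _ _ _ _ _ _ hsum,
        ← hw2, ← hw3, hc₁def, hc₂def]
      field_simp
      ring
    exact no_cross hconvpos hcyc (i+2) (i+4) (i+1)
      ((by decide : ∀ x : Fin 5, x + 2 ≠ x + 4) i)
      ((by decide : ∀ x : Fin 5, x + 2 ≠ x + 1) i)
      ((by decide : ∀ x : Fin 5, x + 2 + 1 ≠ x + 4) i)
      ((by decide : ∀ x : Fin 5, x + 2 + 1 ≠ x + 1) i)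
      ((by decide : ∀ x : Fin 5, x + 4 ≠ x + 1) i)
      c₁ c₂ hc₁ hc₂ hsum hline
  · -- the other far vertex is on the line: collinearity contradiction
    have hφ : dt d (v m' - base) = 0 := by
      rcases mul_eq_zero.mp h0 with h | h
      · exact absurd h hσ
      · exact h
    rcases hmm' with ⟨h1, h2⟩ | ⟨h1, h2⟩ <;> subst h2
    · exact pent_nc hconvpos (i+4) (i+1) (i+3)
        ((by decide : ∀ x : Fin 5, x + 4 ≠ x + 1) i)
        ((by decide : ∀ x : Fin 5, x + 4 ≠ x + 3) i)
        ((by decide : ∀ x : Fin 5, x + 1 ≠ x + 3) i) hφ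
    · exact pent_nc hconvpos (i+4) (i+1) (i+2)
        ((by decide : ∀ x : Fin 5, x + 4 ≠ x + 1) i)
        ((by decide : ∀ x : Fin 5, x + 4 ≠ x + 2) i)
        ((by decide : ∀ x : Fin 5, x + 1 ≠ x + 2) i) hφ
  · -- both far vertices on the same side as `v i` : triangle containment
    set βL : E →ₗ[ℝ] ℝ := (-σ) • dtL d with hβL
    set cβ : ℝ := -σ * dt d base with hcβ
    have hβval : ∀ y : E, βL y = -σ * dt d y := by
      intro y
      rw [hβL, LinearMap.smul_apply, dtL_apply, smul_eq_mul]
    have hzero : dt d (0 : E) = 0 := by simp [dt]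
    have hφi1 : dt d (v (i+1) - base) = 0 := by rw [← hd]; exact dt_self d
    have hφi4 : dt d (base - base) = 0 := by rw [sub_self]; exact hzero
    have hhalf : ∀ y ∈ convexHull ℝ (Set.range v), βL y ≤ cβ := by
      apply convexHull_min ?_ (convex_halfSpace_le (LinearMap.isLinear βL) cβ)
      rintro y ⟨l, rfl⟩
      show βL (v l) ≤ cβ
      rw [hβval, hcβ]
      have key : 0 ≤ σ * dt d (v l - base) → -σ * dt d (v l) ≤ -σ * dt d base := by
        rw [dt_sub]; intro h; nlinarith
      apply key
      have hcase : l = i ∨ l = i+1 ∨ l = i+2 ∨ l = i+3 ∨ l = i+4 :=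
        (by decide : ∀ x y : Fin 5, y = x ∨ y = x+1 ∨ y = x+2 ∨ y = x+3 ∨ y = x+4) i l
      rcases hcase with h | h | h | h | h <;> subst h
      · rw [← hσdef]; exact mul_self_nonneg σ
      · rw [hφi1, mul_zero]
      · rcases hmm' with ⟨h1, _⟩ | ⟨_, h2⟩
        · rw [← h1]; exact hpos.le
        · rw [← h2]; exact hpos'.le
      · rcases hmm' with ⟨_, h2⟩ | ⟨h1, _⟩
        · rw [← h2]; exact hpos'.le
        · rw [← h1]; exact hpos.le
      · rw [← hbase, hφi4, mul_zero]
    obtain ⟨fB, cB, hBle, hBi, hBi1, hBstrict⟩ := edge_face hconvpos hcyc i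
    obtain ⟨fG, cG, hGle, hGi4, hGi4p, hGstrict⟩ := edge_face hconvpos hcyc (i+4)
    rw [(by decide : ∀ x : Fin 5, x + 4 + 1 = x) i] at hGi4p
    have hGstrict' : ∀ k : Fin 5, k ≠ i + 4 → k ≠ i → fG (v k) < cG := by
      intro k h1 h2
      exact hGstrict k h1 (by rwa [(by decide : ∀ x : Fin 5, x + 4 + 1 = x) i])
    have hmP : v m ∈ convexHull ℝ (Set.range v) := subset_convexHull ℝ _ (Set.mem_range_self m)
    have htri : v m ∈ convexHull ℝ ({v (i+4), v (i+1), v i} : Set E) := by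
      apply mem_triangle_of_faces (v (i+4)) (v (i+1)) (v i) (v m) βL fB fG cβ cB cG
      · rw [hβval, hcβ, ← hbase]
      · rw [hβval, hcβ]
        have h1 : dt d (v (i+1)) - dt d base = 0 := by rw [← dt_sub]; exact hφi1
        linear_combination (-σ) * h1
      · rw [hβval, hcβ]
        have h1 : dt d (v i) - dt d base = σ := by rw [← dt_sub, ← hσdef]
        have h2 : 0 < σ * σ := mul_self_pos.mpr hσ
        have h3 : -σ * dt d (v i) = -σ * dt d base - σ * σ := by linear_combination (-σ) * h1
        rw [h3]
        linarith
      · exact hhalf _ hmP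
      · exact hBi1
      · exact hBi
      · exact hBstrict (i+4) ((by decide : ∀ x : Fin 5, x + 4 ≠ x) i)
          ((by decide : ∀ x : Fin 5, x + 4 ≠ x + 1) i)
      · exact hBle _ hmP
      · exact hGi4p
      · exact hGi4
      · exact hGstrict' (i+1) ((by decide : ∀ x : Fin 5, x + 1 ≠ x + 4) i)
          ((by decide : ∀ x : Fin 5, x + 1 ≠ x) i)
      · exact hGle _ hmP
    apply hconvpos m
    apply convexHull_mono ?_ htri
    intro y hy
    rcases hmm' with ⟨h1, _⟩ | ⟨h1, _⟩ <;> subst h1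
    · rcases hy with h | h | h
      · exact ⟨i+4, (by decide : ∀ x : Fin 5, x + 4 ≠ x + 2) i, h.symm⟩
      · exact ⟨i+1, (by decide : ∀ x : Fin 5, x + 1 ≠ x + 2) i, h.symm⟩
      · exact ⟨i, (by decide : ∀ x : Fin 5, x ≠ x + 2) i, h.symm⟩
    · rcases hy with h | h | h
      · exact ⟨i+4, (by decide : ∀ x : Fin 5, x + 4 ≠ x + 3) i, h.symm⟩
      · exact ⟨i+1, (by decide : ∀ x : Fin 5, x + 1 ≠ x + 3) i, h.symm⟩
      · exact ⟨i, (by decide : ∀ x : Fin 5, x ≠ x + 3) i, h.symm⟩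

lemma dt_smul_sub (d x wv w : E) (c : ℝ) :
    dt d ((x - c • wv) - w) = dt d (x - w) - c * dt d wv := by
  simp only [dt, Pi.sub_apply, Pi.smul_apply, smul_eq_mul]
  ring

lemma dt_sub3 (d p q w : E) : dt d (p - q) = dt d (p - w) - dt d (q - w) := by
  simp only [dt, Pi.sub_apply]
  ring

lemma dt_midpoint (d x y w : E) :
    dt d (midpoint ℝ x y - w) = 2⁻¹ * dt d (x - w) + 2⁻¹ * dt d (y - w) := by
  have h2 : (⅟(2:ℝ)) = 2⁻¹ := by norm_num
  rw [midpoint_eq_smul_add, h2, smul_add]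
  exact dt_combo d x y w 2⁻¹ 2⁻¹ (by norm_num)

set_option maxHeartbeats 1000000 in
/-- No quadrilateral inscribed in a convex pentagon intersects the interiors of
all five corner triangles `T i = conv {(v (i−1) + v i)/2, v i, (v (i+1) + v i)/2}`
of the pentagon. -/
theorem stmt_11 (v : Fin 5 → (Fin 2 → ℝ))
    (hconvpos : ∀ i : Fin 5, v i ∉ convexHull ℝ (v '' {j | j ≠ i}))
    (hcyc : ∀ i : Fin 5,
      segment ℝ (v i) (v (i + 1)) ⊆ frontier (convexHull ℝ (Set.range v)))
    (T : Fin 5 → Set (Fin 2 → ℝ))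
    (hT : ∀ i, T i = convexHull ℝ
      {midpoint ℝ (v (i - 1)) (v i), v i, midpoint ℝ (v (i + 1)) (v i)}) :
    ¬ ∃ u : Fin 4 → (Fin 2 → ℝ),
      (∀ a, u a ∈ convexHull ℝ (Set.range v)) ∧
      (∀ i : Fin 5, (convexHull ℝ (Set.range u) ∩ interior (T i)).Nonempty) := by
  rintro ⟨u, hu, hIT⟩
  have hconv : HCP v := hconvpos
  have hcy : HCY v := hcyc
  set d : Fin 5 → E := fun i => v (i+1) - v (i+4) with hddef
  set σ : Fin 5 → ℝ := fun i => dt (d i) (v i - v (i+4)) with hσdef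
  set s : Fin 5 → ℝ := fun i => σ i * σ i / 2 with hsdef
  set gv : Fin 5 → E → ℝ := fun i x => σ i * dt (d i) (x - v (i+4)) - s i with hgvdef
  have hσ : ∀ i, σ i ≠ 0 := fun i =>
    pent_nc hconv (i+4) (i+1) i ((by decide : ∀ x : Fin 5, x + 4 ≠ x + 1) i)
      ((by decide : ∀ x : Fin 5, x + 4 ≠ x) i) ((by decide : ∀ x : Fin 5, x + 1 ≠ x) i)
  have hs : ∀ i, 0 < s i := fun i => by
    have := mul_self_pos.mpr (hσ i)
    simp only [hsdef]
    linarith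
  have hgi : ∀ i, gv i (v i) = s i := by
    intro i
    simp only [hgvdef, hsdef, hσdef]
    ring
  have hzero : ∀ i, dt (d i) (v (i+4) - v (i+4)) = 0 := by
    intro i
    simp only [dt, Pi.sub_apply]
    ring
  have hself : ∀ i, dt (d i) (v (i+1) - v (i+4)) = 0 := by
    intro i
    rw [hddef]
    exact dt_self _
  have hgk : ∀ i k : Fin 5, k ≠ i → gv i (v k) ≤ -(s i) := by
    intro i k hk
    have hcase : k = i ∨ k = i+1 ∨ k = i+2 ∨ k = i+3 ∨ k = i+4 :=
      (by decide : ∀ x y : Fin 5, y = x ∨ y = x+1 ∨ y = x+2 ∨ y = x+3 ∨ y = x+4) i k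
    rcases hcase with h | h | h | h | h
    · exact absurd h hk
    · subst h
      simp only [hgvdef]
      rw [hself i, mul_zero]
      linarith [hs i]
    · subst h
      have := diag_core hconv hcy i (i+2) (i+3) (Or.inl ⟨rfl, rfl⟩)
      simp only [hgvdef]
      rw [← hddef, ← hσdef] at *
      nlinarith [hs i, this]
    · subst h
      have := diag_core hconv hcy i (i+3) (i+2) (Or.inr ⟨rfl, rfl⟩)
      simp only [hgvdef]
      rw [← hddef, ← hσdef] at *
      nlinarith [hs i, this]
    · subst h
      simp only [hgvdef]
      rw [hzero i, mul_zero]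
      linarith [hs i]
  -- linear forms
  set gL : Fin 5 → (E →ₗ[ℝ] ℝ) := fun i => σ i • dtL (d i) with hgLdef
  set cg : Fin 5 → ℝ := fun i => σ i * dt (d i) (v (i+4)) + s i with hcgdef
  have hgL : ∀ i x, gL i x - cg i = gv i x := by
    intro i x
    simp only [hgLdef, hcgdef, hgvdef, LinearMap.smul_apply, smul_eq_mul, dtL_apply, dt_sub]
    ring
  clear_value d σ s gv gL cg
  -- interiors of corner triangles have positive gv
  have hTpos : ∀ i, ∀ x ∈ interior (T i), 0 < gv i x := by
    intro i x hx
    rw [hT i] at hx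
    have he : i - 1 = i + 4 := (by decide : ∀ x : Fin 5, x - 1 = x + 4) i
    rw [he] at hx
    set m₁ : E := midpoint ℝ (v (i+4)) (v i) with hm₁
    set m₂ : E := midpoint ℝ (v (i+1)) (v i) with hm₂
    have hgm₁ : gv i m₁ = 0 := by
      simp only [hgvdef, hm₁]
      rw [dt_midpoint, hzero i]
      simp only [hsdef, hσdef]
      ring
    have hgm₂ : gv i m₂ = 0 := by
      simp only [hgvdef, hm₂]
      rw [dt_midpoint, hself i]
      simp only [hsdef, hσdef]
      ring
    have hhalfconv : Convex ℝ {y : E | 0 ≤ gv i y} := by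
      have hset : {y : E | 0 ≤ gv i y} = {y : E | cg i ≤ gL i y} := by
        ext y
        have := hgL i y
        constructor <;> (intro hy; simp only [Set.mem_setOf_eq] at *; linarith)
      rw [hset]
      exact convex_halfSpace_ge (LinearMap.isLinear (gL i)) (cg i)
    have hsub : convexHull ℝ ({m₁, v i, m₂} : Set E) ⊆ {y : E | 0 ≤ gv i y} := by
      apply convexHull_min ?_ hhalfconv
      rintro y (rfl | rfl | rfl)
      · exact le_of_eq hgm₁.symm
      · show (0:ℝ) ≤ gv i (v i)
        rw [hgi i]
        exact (hs i).le
      · exact le_of_eq hgm₂.symm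
    obtain ⟨ε, hε, hball⟩ := Metric.mem_nhds_iff.mp (mem_interior_iff_mem_nhds.mp hx)
    set wv : E := v i - m₁ with hwv
    have hdtwv : dt (d i) wv = σ i / 2 := by
      rw [hwv, dt_sub3 (d i) (v i) m₁ (v (i+4))]
      rw [hm₁, dt_midpoint, hzero i]
      simp only [hσdef]
      ring
    set c : ℝ := ε / (‖wv‖ + 1) with hc
    have hcpos : 0 < c := div_pos hε (by positivity)
    set y : E := x - c • wv with hy
    have hyball : y ∈ Metric.ball x ε := by
      rw [Metric.mem_ball, dist_eq_norm, hy]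
      have : x - c • wv - x = -(c • wv) := by module
      rw [this, norm_neg, norm_smul, Real.norm_eq_abs, abs_of_pos hcpos, hc]
      rw [div_mul_eq_mul_div, div_lt_iff₀ (by positivity)]
      nlinarith [norm_nonneg wv]
    have hymem : 0 ≤ gv i y := hsub (hball hyball)
    have hgy : gv i y = gv i x - c * (σ i * σ i / 2) := by
      simp only [hgvdef, hy]
      rw [dt_smul_sub, hdtwv]
      ring
    by_contra hle
    push_neg at hle
    rw [hgy] at hymem
    have hσ2 : 0 < σ i * σ i := mul_self_pos.mpr (hσ i)
    have hcs : 0 < c * (σ i * σ i) := mul_pos hcpos hσ2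
    have hsplit : c * (σ i * σ i / 2) = c * (σ i * σ i) / 2 := by ring
    rw [hsplit] at hymem
    linarith [hymem, hle, hcs]
  -- for each i some vertex of the quadrilateral has positive gv i
  have hA : ∀ i : Fin 5, ∃ a : Fin 4, 0 < gv i (u a) := by
    intro i
    obtain ⟨p, hpu, hpT⟩ := hIT i
    have hp : 0 < gv i p := hTpos i p hpT
    by_contra hno
    push_neg at hno
    have hsubu : convexHull ℝ (Set.range u) ⊆ {y : E | gL i y ≤ cg i} := by
      apply convexHull_min ?_ (convex_halfSpace_le (LinearMap.isLinear (gL i)) (cg i))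
      rintro y ⟨a, rfl⟩
      show gL i (u a) ≤ cg i
      have h1 := hno a
      have h2 := hgL i (u a)
      linarith
    have := hsubu hpu
    have h2 := hgL i p
    simp only [Set.mem_setOf_eq] at this
    linarith
  choose asgn hasgn using hA
  obtain ⟨i, j, hij, hija⟩ := Fintype.exists_ne_map_eq_of_card_lt asgn
    (by norm_num [Fintype.card_fin])
  set w : E := u (asgn i) with hw
  have hwP : w ∈ convexHull ℝ (Set.range v) := hu (asgn i)
  have hwi : 0 < gv i w := hasgn i
  have hwj : 0 < gv j w := by
    have := hasgn j
    rwa [← hija] at this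
  -- final separating functional
  set FL : E →ₗ[ℝ] ℝ := (s i)⁻¹ • gL i + (s j)⁻¹ • gL j with hFL
  set cF : ℝ := (s i)⁻¹ * cg i + (s j)⁻¹ * cg j with hcF
  have hexp : ∀ y : E, FL y - cF = (s i)⁻¹ * gv i y + (s j)⁻¹ * gv j y := by
    intro y
    have h1 := hgL i y
    have h2 := hgL j y
    simp only [hFL, hcF, LinearMap.add_apply, LinearMap.smul_apply, smul_eq_mul]
    linear_combination (s i)⁻¹ * h1 + (s j)⁻¹ * h2
  have hinvi : (s i)⁻¹ * s i = 1 := inv_mul_cancel₀ (ne_of_gt (hs i))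
  have hinvj : (s j)⁻¹ * s j = 1 := inv_mul_cancel₀ (ne_of_gt (hs j))
  have hipos : 0 < (s i)⁻¹ := inv_pos.mpr (hs i)
  have hjpos : 0 < (s j)⁻¹ := inv_pos.mpr (hs j)
  clear_value w FL cF
  have hFbound : ∀ y ∈ convexHull ℝ (Set.range v), FL y ≤ cF := by
    apply convexHull_min ?_ (convex_halfSpace_le (LinearMap.isLinear FL) cF)
    rintro y ⟨k, rfl⟩
    show FL (v k) ≤ cF
    have hx := hexp (v k)
    have hgoal : (s i)⁻¹ * gv i (v k) + (s j)⁻¹ * gv j (v k) ≤ 0 := by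
      by_cases hk : k = i
      · have b1 : gv i (v k) = s i := by rw [hk]; exact hgi i
        have b2 : gv j (v k) ≤ -(s j) := by rw [hk]; exact hgk j i hij
        have b3 : (s j)⁻¹ * gv j (v k) ≤ (s j)⁻¹ * (-(s j)) :=
          mul_le_mul_of_nonneg_left b2 hjpos.le
        rw [b1]
        linarith [hinvi, hinvj, b3]
      · by_cases hk' : k = j
        · have b1 : gv j (v k) = s j := by rw [hk']; exact hgi j
          have b2 : gv i (v k) ≤ -(s i) := hgk i k hk
          have b3 : (s i)⁻¹ * gv i (v k) ≤ (s i)⁻¹ * (-(s i)) :=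
            mul_le_mul_of_nonneg_left b2 hipos.le
          rw [b1]
          linarith [hinvi, hinvj, b3]
        · have b2 : gv i (v k) ≤ -(s i) := hgk i k hk
          have b2' : gv j (v k) ≤ -(s j) := hgk j k hk'
          have b3 : (s i)⁻¹ * gv i (v k) ≤ (s i)⁻¹ * (-(s i)) :=
            mul_le_mul_of_nonneg_left b2 hipos.le
          have b3' : (s j)⁻¹ * gv j (v k) ≤ (s j)⁻¹ * (-(s j)) :=
            mul_le_mul_of_nonneg_left b2' hjpos.le
          linarith [hinvi, hinvj, b3, b3']
    linarith
  have hcontra := hFbound w hwP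
  have hx := hexp w
  linarith [hcontra, hx, mul_pos hipos hwi, mul_pos hjpos hwj]
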